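/- Let k be a natural number and n > 2. For every j in {1,...,k}, let a^j = (a^j_1,...,a^j_n) be a vector in the unit ball of ℓ_∞^n (i.e. |a^j_i| ≤ 1 for all i). Then there exist signs θ_1,...,θ_n ∈ {-1,1} such that for every j in {1,...,k}, |∑_{i=1}^n θ_i a^j_i| ≤ 2^k. -/
import Mathlib

lemma common_signs_aux (k : ℕ) {ι : Type*} [DecidableEq ι] (s : Finset ι)
    (a : Fin k → ι → ℝ) (ha : ∀ j, ∀ i ∈ s, |a j i| ≤ 1) :
    ∃ θ : ι → ℝ, (∀ i, θ i = 1 ∨ θ i = -1) ∧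
      ∀ j, |∑ i ∈ s, θ i * a j i| ≤ 2 ^ k := by
  induction s using Finset.strongInduction generalizing a with
  | _ s ih =>
    by_cases hcard : s.card ≤ 2 ^ k
    · refine ⟨fun _ => 1, fun _ => Or.inl rfl, fun j => ?_⟩
      calc |∑ i ∈ s, (1 : ℝ) * a j i| ≤ ∑ i ∈ s, |(1 : ℝ) * a j i| :=
            Finset.abs_sum_le_sum_abs _ _
        _ ≤ ∑ _i ∈ s, (1 : ℝ) := Finset.sum_le_sum (fun i hi => by simpa using ha j i hi)
        _ = (s.card : ℝ) := by simp
        _ ≤ 2 ^ k := by exact_mod_cast hcard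
    · push_neg at hcard
      have hmaps : ∀ i ∈ s, (fun j => decide (0 ≤ a j i)) ∈
          (Finset.univ : Finset (Fin k → Bool)) := fun _ _ => Finset.mem_univ _
      have hlt : (Finset.univ : Finset (Fin k → Bool)).card < s.card := by
        simpa [Finset.card_univ] using hcard
      obtain ⟨i₁, hi₁, i₂, hi₂, hne, heq⟩ :=
        Finset.exists_ne_map_eq_of_card_lt_of_maps_to hlt hmaps
      have hsign : ∀ j, 0 ≤ a j i₁ ↔ 0 ≤ a j i₂ := by
        intro j
        have := congrFun heq j
        simpa using this
      set a' : Fin k → ι → ℝ := fun j => Function.update (a j) i₁ (a j i₁ - a j i₂) with ha'def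
      have hmem₁ : i₁ ∈ s.erase i₂ := Finset.mem_erase.mpr ⟨hne, hi₁⟩
      have ha' : ∀ j, ∀ i ∈ s.erase i₂, |a' j i| ≤ 1 := by
        intro j i hi
        rcases eq_or_ne i i₁ with rfl | hii
        · have h1 := ha j i hi₁
          have h2 := ha j i₂ hi₂
          have hs := hsign j
          simp only [ha'def, Function.update_self]
          rw [abs_le] at h1 h2 ⊢
          rcases le_or_gt 0 (a j i) with hp | hp
          · have := hs.mp hp
            constructor <;> linarith
          · have : ¬ (0 ≤ a j i₂) := fun h => absurd (hs.mpr h) (not_le.mpr hp)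
            push_neg at this
            constructor <;> linarith
        · simp only [ha'def, Function.update_of_ne hii]
          exact ha j i (Finset.mem_of_mem_erase hi)
      obtain ⟨θ', hθ'sign, hθ'⟩ := ih (s.erase i₂) (Finset.erase_ssubset hi₂) a' ha'
      refine ⟨Function.update θ' i₂ (-(θ' i₁)), ?_, ?_⟩
      · intro i
        rcases eq_or_ne i i₂ with rfl | hii
        · rw [Function.update_self]
          rcases hθ'sign i₁ with h | h <;> rw [h] <;> simp
        · rw [Function.update_of_ne hii]; exact hθ'sign i
      · intro j
        have key : ∑ i ∈ s, Function.update θ' i₂ (-(θ' i₁)) i * a j i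
            = ∑ i ∈ s.erase i₂, θ' i * a' j i := by
          rw [← Finset.sum_erase_add s _ hi₂,
            ← Finset.sum_erase_add (s.erase i₂)
              (fun i => Function.update θ' i₂ (-(θ' i₁)) i * a j i) hmem₁,
            ← Finset.sum_erase_add (s.erase i₂) (fun i => θ' i * a' j i) hmem₁]
          have hcongr : ∑ i ∈ (s.erase i₂).erase i₁,
              Function.update θ' i₂ (-(θ' i₁)) i * a j i
              = ∑ i ∈ (s.erase i₂).erase i₁, θ' i * a' j i := by
            apply Finset.sum_congr rfl
            intro i hi
            have h1 : i ≠ i₁ := (Finset.mem_erase.mp hi).1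
            have h2 : i ≠ i₂ := (Finset.mem_erase.mp (Finset.mem_of_mem_erase hi)).1
            rw [Function.update_of_ne h2]
            simp only [ha'def, Function.update_of_ne h1]
          rw [hcongr, Function.update_of_ne hne, Function.update_self]
          simp only [ha'def, Function.update_self]
          ring
        rw [key]
        exact hθ' j
  
/-- **Common signs lemma.** Given `k` vectors `a^1, …, a^k` in the unit ball of `ℓ_∞^n`
(with `n > 2`), there is a single choice of signs `θ_1, …, θ_n ∈ {-1, 1}` such that
`|∑_{i=1}^n θ_i a^j_i| ≤ 2^k` for every `j ∈ {1, …, k}`. -/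
theorem common_signs_lemma (k n : ℕ) (hn : 2 < n) (a : Fin k → Fin n → ℝ)
    (ha : ∀ j i, |a j i| ≤ 1) :
    ∃ θ : Fin n → ℝ, (∀ i, θ i = 1 ∨ θ i = -1) ∧
      ∀ j, |∑ i, θ i * a j i| ≤ 2 ^ k := by
  obtain ⟨θ, h1, h2⟩ := common_signs_aux k (Finset.univ : Finset (Fin n)) a
    (fun j i _ => ha j i)
  exact ⟨θ, h1, fun j => h2 j⟩
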